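/- arXiv:2603.00567 — 2 statements merged into one kernel-verified Lean document; each statement's English description precedes it below -/
import Mathlib

section
/- Let K ≥ 2 be an integer and τ > 0 a temperature. For score vectors S, S' : Fin K → ℝ, let π_S and π_{S'} be the associated softmax policies. Then the total variation distance satisfies TV(π_S, π_{S'}) ≤ ((K − 1)/(2τ)) · max_{a ∈ Fin K} |S(a) − S'(a)|. -/
/-- The softmax policy with temperature `τ` associated with a score vector
`S : Fin K → ℝ`. -/
noncomputable def softmaxPolicy {K : ℕ} (τ : ℝ) (S : Fin K → ℝ) (a : Fin K) : ℝ :=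
  Real.exp (S a / τ) / ∑ b : Fin K, Real.exp (S b / τ)

lemma softmax_coord_lip (K : ℕ) (τ : ℝ) (hτ : 0 < τ) (S S' : Fin K → ℝ)
    (M : ℝ) (hMle : ∀ b, |S b - S' b| ≤ M) (a : Fin K) :
    |softmaxPolicy τ S a - softmaxPolicy τ S' a| ≤ M / (2 * τ) := by
  set Δ : Fin K → ℝ := fun b => S' b - S b with hΔ
  set N : Fin K → ℝ → ℝ := fun b t => Real.exp ((S b + t * Δ b) / τ) with hN
  set D : ℝ → ℝ := fun t => ∑ b, N b t with hD
  have hNpos : ∀ b t, 0 < N b t := fun b t => Real.exp_pos _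
  have hDpos : ∀ t, 0 < D t := fun t =>
    Finset.sum_pos (fun b _ => hNpos b t) ⟨a, Finset.mem_univ a⟩
  have hNderiv : ∀ b t, HasDerivAt (fun s => N b s) (Δ b / τ * N b t) t := by
    intro b t
    have h1 : HasDerivAt (fun t : ℝ => (S b + t * Δ b) / τ) (Δ b / τ) t := by
      have := (((hasDerivAt_id t).mul_const (Δ b)).const_add (S b)).div_const τ
      simpa using this
    simpa [hN, mul_comm] using h1.exp
  have hDderiv : ∀ t, HasDerivAt D (∑ b, Δ b / τ * N b t) t := fun t =>
    HasDerivAt.fun_sum (fun b _ => hNderiv b t)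
  set φ : ℝ → ℝ := fun t => N a t / D t with hφ
  set φ' : ℝ → ℝ := fun t =>
      ((Δ a / τ * N a t) * D t - N a t * (∑ b, Δ b / τ * N b t)) / (D t) ^ 2 with hφ'
  have hφderiv : ∀ t, HasDerivAt φ (φ' t) t := fun t =>
    (hNderiv a t).div (hDderiv t) (hDpos t).ne'
  have hMnonneg : 0 ≤ M := le_trans (abs_nonneg _) (hMle a)
  have hΔle : ∀ b, |Δ b| ≤ M := by
    intro b
    rw [hΔ, abs_sub_comm]
    exact hMle b
  have hbound : ∀ t : ℝ, |φ' t| ≤ M / (2 * τ) := by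
    intro t
    have key : (Δ a / τ * N a t) * D t - N a t * (∑ b, Δ b / τ * N b t)
        = (N a t / τ) * ∑ b, (Δ a - Δ b) * N b t := by
      rw [hD, Finset.mul_sum, Finset.mul_sum, Finset.mul_sum, ← Finset.sum_sub_distrib]
      exact Finset.sum_congr rfl (fun b _ => by ring)
    have hsum_abs : |∑ b, (Δ a - Δ b) * N b t| ≤ 2 * M * (D t - N a t) := by
      have h1 : ∑ b, (Δ a - Δ b) * N b t
          = ∑ b ∈ Finset.univ.erase a, (Δ a - Δ b) * N b t := by
        rw [Finset.sum_erase]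
        simp
      rw [h1]
      calc |∑ b ∈ Finset.univ.erase a, (Δ a - Δ b) * N b t|
          ≤ ∑ b ∈ Finset.univ.erase a, |(Δ a - Δ b) * N b t| :=
            Finset.abs_sum_le_sum_abs _ _
        _ ≤ ∑ b ∈ Finset.univ.erase a, 2 * M * N b t := by
            apply Finset.sum_le_sum
            intro b _
            rw [abs_mul, abs_of_pos (hNpos b t)]
            have := abs_sub (Δ a) (Δ b)
            have h2 : |Δ a - Δ b| ≤ 2 * M := by
              have := hΔle a; have := hΔle b
              have := abs_sub_abs_le_abs_sub (Δ a) (Δ b)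
              calc |Δ a - Δ b| ≤ |Δ a| + |Δ b| := abs_sub _ _
                _ ≤ 2 * M := by linarith [hΔle a, hΔle b]
            exact mul_le_mul_of_nonneg_right h2 (hNpos b t).le
        _ = 2 * M * (D t - N a t) := by
            rw [← Finset.mul_sum, hD, Finset.sum_erase_eq_sub (Finset.mem_univ a)]
    have : φ' t = (N a t / τ * ∑ b, (Δ a - Δ b) * N b t) / (D t)^2 := by
      rw [hφ']; simp only [key]
    rw [this]
    have hx := hNpos a t
    have hd := hDpos t
    have hxd : N a t ≤ D t := Finset.single_le_sum (fun b _ => (hNpos b t).le) (Finset.mem_univ a)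
    rw [abs_div, abs_mul, abs_of_pos (div_pos hx hτ), abs_of_pos (pow_pos hd 2)]
    rw [div_le_div_iff₀ (pow_pos hd 2) (by positivity : (0:ℝ) < 2 * τ)]
    have h3 : N a t / τ * |∑ b, (Δ a - Δ b) * N b t| ≤
        N a t / τ * (2 * M * (D t - N a t)) :=
      mul_le_mul_of_nonneg_left hsum_abs (by positivity)
    have h4 : N a t * (D t - N a t) * 4 ≤ (D t)^2 := by nlinarith [sq_nonneg (D t - 2 * N a t)]
    have h5 : N a t / τ * (2 * M * (D t - N a t)) * (2 * τ)
        = 4 * M * (N a t * (D t - N a t)) := by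
      field_simp
      ring
    calc N a t / τ * |∑ b, (Δ a - Δ b) * N b t| * (2 * τ)
        ≤ N a t / τ * (2 * M * (D t - N a t)) * (2 * τ) := by
          apply mul_le_mul_of_nonneg_right h3 (by positivity)
      _ = 4 * M * (N a t * (D t - N a t)) := h5
      _ ≤ M * (D t)^2 := by nlinarith [sq_nonneg (D t - 2 * N a t), mul_nonneg hMnonneg (sq_nonneg (D t - 2 * N a t))]
  have hmvt := (convex_univ : Convex ℝ (Set.univ : Set ℝ)).norm_image_sub_le_of_norm_hasDerivWithin_le
    (f' := φ') (fun t _ => (hφderiv t).hasDerivWithinAt)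
    (fun t _ => by simpa using hbound t) (Set.mem_univ (0:ℝ)) (Set.mem_univ (1:ℝ))
  have hφ0 : φ 0 = softmaxPolicy τ S a := by
    simp [hφ, hN, hD, softmaxPolicy]
  have hφ1 : φ 1 = softmaxPolicy τ S' a := by
    simp [hφ, hN, hD, hΔ, softmaxPolicy]
  rw [abs_sub_comm]
  calc |softmaxPolicy τ S' a - softmaxPolicy τ S a| = ‖φ 1 - φ 0‖ := by
        rw [hφ0, hφ1]; simp [Real.norm_eq_abs]
    _ ≤ M / (2 * τ) * ‖(1:ℝ) - 0‖ := hmvt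
    _ = M / (2 * τ) := by simp

/-- Softmax total variation sensitivity: for score vectors `S, S'` and
temperature `τ > 0`, the total variation distance between the two softmax
policies is at most `((K − 1)/(2τ)) · max_a |S(a) − S'(a)|`. -/
theorem softmax_tv_le (K : ℕ) (hK : 2 ≤ K) (τ : ℝ) (hτ : 0 < τ)
    (S S' : Fin K → ℝ) :
    (1 / 2) * ∑ a : Fin K, |softmaxPolicy τ S a - softmaxPolicy τ S' a| ≤
      ((K : ℝ) - 1) / (2 * τ) *
        Finset.univ.sup' (Finset.univ_nonempty_iff.mpr ⟨⟨0, by omega⟩⟩)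
          (fun a : Fin K => |S a - S' a|) := by
  set M := Finset.univ.sup' (Finset.univ_nonempty_iff.mpr ⟨⟨0, by omega⟩⟩)
      (fun a : Fin K => |S a - S' a|) with hMdef
  have hMle : ∀ b, |S b - S' b| ≤ M := by
    intro b
    rw [hMdef]
    exact Finset.le_sup' (fun a : Fin K => |S a - S' a|) (Finset.mem_univ b)
  have hMnonneg : 0 ≤ M := le_trans (abs_nonneg _) (hMle ⟨0, by omega⟩)
  have hsum : ∑ a : Fin K, |softmaxPolicy τ S a - softmaxPolicy τ S' a|
      ≤ (K : ℝ) * (M / (2 * τ)) := by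
    calc ∑ a : Fin K, |softmaxPolicy τ S a - softmaxPolicy τ S' a|
        ≤ ∑ _a : Fin K, M / (2 * τ) :=
          Finset.sum_le_sum (fun a _ => softmax_coord_lip K τ hτ S S' M hMle a)
      _ = (K : ℝ) * (M / (2 * τ)) := by
          simp [Finset.sum_const, mul_comm]
  have hK2 : (2:ℝ) ≤ (K:ℝ) := by exact_mod_cast hK
  have hu : 0 ≤ M / (2 * τ) := by positivity
  have hrhs : ((K : ℝ) - 1) / (2 * τ) * M = ((K:ℝ) - 1) * (M / (2 * τ)) := by ring
  rw [hrhs]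
  nlinarith [mul_nonneg hu (by linarith : (0:ℝ) ≤ (K:ℝ) - 2)]
end

section
/- Let K ≥ 2 be an integer, η > 0 a learning rate, and for each round s ≥ 1 let r̂_s : Fin K → ℝ be reward estimates with |r̂_s(a)| ≤ 1 for all a. Define the cumulative score S_t(a) = η · Σ_{s=1}^{t} r̂_s(a) and the exponential-weights policy π_t(a) = exp(S_t(a)) / Σ_{a'} exp(S_t(a')). Then for all t ≥ 1 and τ ≥ 0, the policy drift satisfies TV(π_t, π_{t+τ}) ≤ (K − 1)·η·τ. -/
private lemma exp_pade (d : ℝ) (hd : 0 ≤ d) :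
    Real.exp d - 1 ≤ d * (Real.exp d + 1) / 2 := by
  set f : ℝ → ℝ := fun x => x * (Real.exp x + 1) / 2 - (Real.exp x - 1) with hf
  have hderiv : ∀ x : ℝ, HasDerivAt f ((1 * (Real.exp x + 1) + x * Real.exp x) / 2
      - Real.exp x) x := by
    intro x
    exact (((hasDerivAt_id x).mul ((Real.hasDerivAt_exp x).add_const 1)).div_const 2).sub
      ((Real.hasDerivAt_exp x).sub_const 1)
  have hmono : MonotoneOn f (Set.Ici 0) := by
    refine monotoneOn_of_deriv_nonneg (convex_Ici 0)
      (Continuous.continuousOn (by fun_prop))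
      (fun x _ => (hderiv x).differentiableAt.differentiableWithinAt) ?_
    intro x hx
    rw [interior_Ici] at hx
    rw [(hderiv x).deriv]
    have h1 : Real.exp x - 1 ≤ x * Real.exp x := by
      have := Real.add_one_le_exp (-x)
      have hpos := Real.exp_pos x
      have h2 : (-x + 1) * Real.exp x ≤ Real.exp (-x) * Real.exp x :=
        mul_le_mul_of_nonneg_right this hpos.le
      rw [← Real.exp_add, neg_add_cancel, Real.exp_zero] at h2
      nlinarith
    nlinarith
  have h0 : f 0 = 0 := by simp [hf]
  have := hmono (Set.self_mem_Ici) (Set.mem_Ici.2 hd) hd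
  rw [h0] at this
  simp only [hf] at this
  linarith

private lemma abs_exp_sub_exp (u v : ℝ) :
    |Real.exp u - Real.exp v| ≤ |u - v| / 2 * (Real.exp u + Real.exp v) := by
  have key : ∀ a b : ℝ, b ≤ a →
      |Real.exp a - Real.exp b| ≤ |a - b| / 2 * (Real.exp a + Real.exp b) := by
    intro a b hba
    have hd : 0 ≤ a - b := by linarith
    have h1 : Real.exp (a - b) - 1 ≤ (a - b) * (Real.exp (a - b) + 1) / 2 :=
      exp_pade _ hd
    have h2 : Real.exp b * (Real.exp (a - b) - 1) ≤
        Real.exp b * ((a - b) * (Real.exp (a - b) + 1) / 2) :=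
      mul_le_mul_of_nonneg_left h1 (Real.exp_pos b).le
    have hsplit : Real.exp b * Real.exp (a - b) = Real.exp a := by
      rw [← Real.exp_add]; ring_nf
    have habs1 : |Real.exp a - Real.exp b| = Real.exp a - Real.exp b := by
      rw [abs_of_nonneg]; linarith [Real.exp_le_exp.2 hba]
    have habs2 : |a - b| = a - b := abs_of_nonneg hd
    rw [habs1, habs2]
    nlinarith [Real.exp_pos b]
  rcases le_total v u with h | h
  · exact key u v h
  · have := key v u h
    rw [abs_sub_comm (Real.exp u), abs_sub_comm u]
    linarith [this, abs_sub_comm v u]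

/-- FTRL / exponential-weights policy drift: with learning rate `η > 0`,
bounded reward estimates `|r̂_s(a)| ≤ 1`, cumulative scores
`S_t(a) = η·Σ_{s=1}^t r̂_s(a)` and policies
`π_t(a) = exp(S_t(a)) / Σ_{a'} exp(S_t(a'))`, the total variation distance
between `π_t` and `π_{t+τ}` is at most `(K − 1)·η·τ`. -/
theorem ftrl_policy_drift (K : ℕ) (hK : 2 ≤ K) (η : ℝ) (hη : 0 < η)
    (r : ℕ → Fin K → ℝ) (hr : ∀ s a, |r s a| ≤ 1)
    (S : ℕ → Fin K → ℝ)
    (hS : ∀ u a, S u a = η * ∑ s ∈ Finset.Icc 1 u, r s a)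
    (π : ℕ → Fin K → ℝ)
    (hπ : ∀ u a, π u a = Real.exp (S u a) / ∑ a' : Fin K, Real.exp (S u a'))
    (t τ : ℕ) (ht : 1 ≤ t) :
    (1 / 2) * ∑ a : Fin K, |π t a - π (t + τ) a| ≤ ((K : ℝ) - 1) * η * τ := by
  have hKpos : 0 < K := by omega
  haveI : NeZero K := ⟨hKpos.ne'⟩
  set t' := t + τ with ht'
  set Z : ℕ → ℝ := fun u => ∑ a' : Fin K, Real.exp (S u a') with hZ
  have hZpos : ∀ u, 0 < Z u := fun u =>
    Finset.sum_pos (fun a _ => Real.exp_pos _) Finset.univ_nonempty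
  -- score drift bound
  have hdrift : ∀ a, |S t' a - S t a| ≤ η * τ := by
    intro a
    have hIcc : ∀ u : ℕ, Finset.Icc 1 u = Finset.Ioc 0 u := fun u =>
      Finset.Icc_add_one_left_eq_Ioc 0 u
    have hsum : (∑ s ∈ Finset.Ioc 0 t, r s a) + ∑ s ∈ Finset.Ioc t t', r s a
        = ∑ s ∈ Finset.Ioc 0 t', r s a :=
      Finset.sum_Ioc_consecutive _ (Nat.zero_le t) (by omega)
    have : S t' a - S t a = η * ∑ s ∈ Finset.Ioc t t', r s a := by
      rw [hS, hS, hIcc, hIcc, ← hsum]; ring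
    rw [this, abs_mul, abs_of_pos hη]
    apply mul_le_mul_of_nonneg_left _ hη.le
    calc |∑ s ∈ Finset.Ioc t t', r s a| ≤ ∑ s ∈ Finset.Ioc t t', |r s a| :=
          Finset.abs_sum_le_sum_abs _ _
      _ ≤ ∑ s ∈ Finset.Ioc t t', (1 : ℝ) :=
          Finset.sum_le_sum fun s _ => hr s a
      _ = τ := by rw [Finset.sum_const, Nat.card_Ioc]; simp [ht']
  -- per-coordinate bound
  have hcoord : ∀ a : Fin K, |π t a - π t' a| ≤
      (η * τ) * (∑ b : Fin K, (Real.exp (S t a + S t' b) + Real.exp (S t' a + S t b)))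
        / (Z t * Z t') := by
    intro a
    have hdiff : π t a - π t' a =
        (∑ b : Fin K, (Real.exp (S t a + S t' b) - Real.exp (S t' a + S t b)))
          / (Z t * Z t') := by
      have hnum : Real.exp (S t a) * Z t' - Z t * Real.exp (S t' a)
          = ∑ b : Fin K, (Real.exp (S t a + S t' b) - Real.exp (S t' a + S t b)) := by
        rw [Finset.sum_sub_distrib]
        simp only [Real.exp_add]
        rw [← Finset.mul_sum, ← Finset.mul_sum]
        simp only [hZ]
        ring
      rw [hπ, hπ]
      rw [div_sub_div _ _ (hZpos t).ne' (hZpos t').ne', hnum]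
    rw [hdiff, abs_div, abs_of_pos (mul_pos (hZpos t) (hZpos t'))]
    gcongr
    calc |∑ b : Fin K, (Real.exp (S t a + S t' b) - Real.exp (S t' a + S t b))|
        ≤ ∑ b : Fin K, |Real.exp (S t a + S t' b) - Real.exp (S t' a + S t b)| :=
          Finset.abs_sum_le_sum_abs _ _
      _ ≤ ∑ b : Fin K, (η * τ) *
            (Real.exp (S t a + S t' b) + Real.exp (S t' a + S t b)) := by
          apply Finset.sum_le_sum
          intro b _
          refine (abs_exp_sub_exp _ _).trans ?_
          apply mul_le_mul_of_nonneg_right _ (by positivity)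
          have h1 := hdrift a
          have h2 := hdrift b
          have : |S t a + S t' b - (S t' a + S t b)| ≤ 2 * (η * τ) := by
            have : S t a + S t' b - (S t' a + S t b)
                = (S t' b - S t b) - (S t' a - S t a) := by ring
            rw [this]
            calc |(S t' b - S t b) - (S t' a - S t a)|
                ≤ |S t' b - S t b| + |S t' a - S t a| := abs_sub _ _
              _ ≤ 2 * (η * τ) := by linarith
          linarith
      _ = (η * τ) * ∑ b : Fin K,
            (Real.exp (S t a + S t' b) + Real.exp (S t' a + S t b)) := by
          rw [Finset.mul_sum]
  -- sum the double exponential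
  have hdouble : ∑ a : Fin K, ∑ b : Fin K,
      (Real.exp (S t a + S t' b) + Real.exp (S t' a + S t b)) = 2 * (Z t * Z t') := by
    simp only [Real.exp_add, Finset.sum_add_distrib, ← Finset.mul_sum, ← Finset.sum_mul]
    simp only [hZ]
    ring
  have hτ : (0:ℝ) ≤ (τ : ℝ) := Nat.cast_nonneg τ
  have hZp : 0 < Z t * Z t' := mul_pos (hZpos t) (hZpos t')
  calc (1 / 2) * ∑ a : Fin K, |π t a - π t' a|
      ≤ (1 / 2) * ∑ a : Fin K, ((η * τ) * (∑ b : Fin K,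
          (Real.exp (S t a + S t' b) + Real.exp (S t' a + S t b))) / (Z t * Z t')) := by
        gcongr with a _
        exact hcoord a
    _ = (1 / 2) * ((η * τ) * (2 * (Z t * Z t')) / (Z t * Z t')) := by
        rw [← Finset.sum_div, ← Finset.mul_sum, hdouble]
    _ = η * τ := by field_simp; rw [mul_assoc, mul_div_assoc, div_self hZp.ne', mul_one]
    _ ≤ ((K : ℝ) - 1) * η * τ := by
        have hK' : (2:ℝ) ≤ (K:ℝ) := by exact_mod_cast hK
        have h2 : (0:ℝ) ≤ (K:ℝ) - 2 := by linarith
        nlinarith [mul_nonneg h2 (mul_nonneg hη.le hτ)]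
end
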